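/- Let P : E → E and Q : F → F be endofunctors and (H, σ) : P → Q a strong morphism (so σ : QH ⇒ HP is a natural isomorphism). Suppose H has a right adjoint R : F → E. Then the induced functor H̃ : Alg(P) → Alg(Q), given by H̃(X, s) = (HX, Hs ∘ σ(X)), has a right adjoint R̃ : Alg(Q) → Alg(P) satisfying U_P ∘ R̃ = R ∘ U_Q. -/

import Mathlib

open CategoryTheory CategoryTheory.Limits

universe v u v₂ u₂

variable {E : Type u} [Category.{v} E] {F : Type u₂} [Category.{v₂} F]

/-- The functor `Alg(P) ⥤ Alg(Q)` induced by a lax morphism `(H, σ) : P → Q`,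
sending `(X, s)` to `(HX, Hs ∘ σ X)`. -/
@[simps]
def algMap {P : E ⥤ E} {Q : F ⥤ F} (H : E ⥤ F) (σ : H ⋙ Q ⟶ P ⋙ H) :
    Endofunctor.Algebra P ⥤ Endofunctor.Algebra Q where
  obj A := ⟨H.obj A.a, σ.app A.a ≫ H.map A.str⟩
  map {A B} f :=
    { f := H.map f.f
      h := by
        have h1 := σ.naturality f.f
        dsimp at h1 ⊢
        rw [← Category.assoc, h1, Category.assoc, Category.assoc, ← H.map_comp, f.h,
          H.map_comp] }
  map_id A := by ext; simp
  map_comp f g := by ext; simp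

section Aux

variable {P : E ⥤ E} {Q : F ⥤ F} (H : E ⥤ F) (σ : H ⋙ Q ≅ P ⋙ H) (R : F ⥤ E) (adj : H ⊣ R)

private lemma sigma_nat (u : E) (v : E) (g : u ⟶ v) :
    H.map (P.map g) ≫ σ.inv.app v = σ.inv.app u ≫ Q.map (H.map g) :=
  σ.inv.naturality g

/-- The lifted right adjoint on algebras. -/
@[simps]
def algRt : Endofunctor.Algebra Q ⥤ Endofunctor.Algebra P where
  obj B := ⟨R.obj B.a, adj.homEquiv _ _ (σ.inv.app _ ≫ Q.map (adj.counit.app B.a) ≫ B.str)⟩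
  map {A B} f :=
    { f := R.map f.f
      h := by
        apply (adj.homEquiv _ _).symm.injective
        dsimp
        rw [Adjunction.homEquiv_naturality_left_symm,
          Adjunction.homEquiv_naturality_right_symm]
        simp only [Equiv.symm_apply_apply]
        rw [reassoc_of% (sigma_nat H σ (R.obj A.a) (R.obj B.a) (R.map f.f))]
        simp only [Category.assoc, ← Q.map_comp_assoc]
        have hc : H.map (R.map f.f) ≫ adj.counit.app B.a = adj.counit.app A.a ≫ f.f := by
          have := adj.counit.naturality f.f; simp_all
        
        rw [hc]
        simp [f.h] }
  map_id A := by ext; simp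
  map_comp f g := by ext; simp

private lemma key_fwd (A : Endofunctor.Algebra P) (B : Endofunctor.Algebra Q)
    (f : (algMap H σ.hom).obj A ⟶ B) :
    P.map ((adj.homEquiv A.a B.a) f.f) ≫ ((algRt H σ R adj).obj B).str =
      A.str ≫ (adj.homEquiv A.a B.a) f.f := by
  have hcomp := f.h
  obtain ⟨ff, hff⟩ : ∃ ff : H.obj A.a ⟶ B.a, ff = f.f := ⟨_, rfl⟩
  rw [← hff] at hcomp ⊢
  replace hcomp : Q.map ff ≫ B.str = (σ.hom.app A.a ≫ H.map A.str) ≫ ff := hcomp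
  apply (adj.homEquiv _ _).symm.injective
  show (adj.homEquiv _ _).symm (P.map (adj.homEquiv A.a B.a ff) ≫ adj.homEquiv _ _
      (σ.inv.app (R.obj B.a) ≫ Q.map (adj.counit.app B.a) ≫ B.str)) =
    (adj.homEquiv _ _).symm (A.str ≫ adj.homEquiv A.a B.a ff)
  rw [Adjunction.homEquiv_naturality_left_symm, Adjunction.homEquiv_naturality_left_symm]
  simp only [Equiv.symm_apply_apply]
  rw [reassoc_of% (sigma_nat H σ A.a (R.obj B.a) ((adj.homEquiv A.a B.a) ff))]
  have hf : H.map ((adj.homEquiv A.a B.a) ff) ≫ adj.counit.app B.a = ff := by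
    simp [Adjunction.homEquiv]
  rw [← Q.map_comp_assoc, hf]
  rw [hcomp]
  simp

private lemma key_bwd (A : Endofunctor.Algebra P) (B : Endofunctor.Algebra Q)
    (g : A ⟶ (algRt H σ R adj).obj B) :
    Q.map ((adj.homEquiv A.a B.a).symm g.f) ≫ B.str =
      (σ.hom.app A.a ≫ H.map A.str) ≫ (adj.homEquiv A.a B.a).symm g.f := by
  have hg := g.h
  obtain ⟨gg, hgg⟩ : ∃ gg : A.a ⟶ R.obj B.a, gg = g.f := ⟨_, rfl⟩
  rw [← hgg] at hg ⊢
  replace hg : P.map gg ≫ adj.homEquiv _ _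
      (σ.inv.app (R.obj B.a) ≫ Q.map (adj.counit.app B.a) ≫ B.str) = A.str ≫ gg := hg
  have hg' := congrArg (adj.homEquiv _ _).symm hg
  rw [Adjunction.homEquiv_naturality_left_symm,
    Adjunction.homEquiv_naturality_left_symm] at hg'
  simp only [Equiv.symm_apply_apply] at hg'
  rw [reassoc_of% (sigma_nat H σ A.a (R.obj B.a) gg)] at hg'
  have hsymm : H.map gg ≫ adj.counit.app B.a = (adj.homEquiv A.a B.a).symm gg := by
    simp [Adjunction.homEquiv]
  rw [← Q.map_comp_assoc, hsymm] at hg'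
  rw [Category.assoc, ← hg']
  simp
end Aux

/-- for a strong morphism `(H, σ) : P → Q` of endofunctors such that `H` has a
right adjoint `R`, the induced functor `H̃ : Alg(P) ⥤ Alg(Q)` has a right adjoint
`R̃ : Alg(Q) ⥤ Alg(P)` with `U_P ∘ R̃ = R ∘ U_Q`. -/
theorem algebra_adjoint_lifting (P : E ⥤ E) (Q : F ⥤ F) (H : E ⥤ F)
    (σ : H ⋙ Q ≅ P ⋙ H) (R : F ⥤ E) (adj : H ⊣ R) :
    ∃ Rt : Endofunctor.Algebra Q ⥤ Endofunctor.Algebra P,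
      Nonempty (algMap H σ.hom ⊣ Rt) ∧
        Rt ⋙ Endofunctor.Algebra.forget P = Endofunctor.Algebra.forget Q ⋙ R := by
  refine ⟨algRt H σ R adj, ⟨?_⟩, rfl⟩
  refine Adjunction.mkOfHomEquiv
    { homEquiv := fun A B =>
        { toFun := fun f => { f := adj.homEquiv _ _ f.f, h := key_fwd H σ R adj A B f }
          invFun := fun g =>
            { f := (adj.homEquiv _ _).symm g.f
              h := by
                have := key_bwd H σ R adj A B g
                exact this }
          left_inv := fun f => by ext; exact (adj.homEquiv _ _).symm_apply_apply f.f
          right_inv := fun g => by ext; exact (adj.homEquiv _ _).apply_symm_apply g.f }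
      homEquiv_naturality_left_symm := fun f g => by
        ext; exact Adjunction.homEquiv_naturality_left_symm adj f.f g.f
      homEquiv_naturality_right := fun f g => by
        ext; exact Adjunction.homEquiv_naturality_right adj f.f g.f }
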